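/- Every 2×2 density matrix ρ admits a pure state decomposition {(p_k, ψ_k)} such that |ψ_k(i)|² = ρ_ii for every k and i. Consequently, for every function f : ℝ² → ℝ that is symmetric and concave on the probability simplex Ω₂, the maximum of the average coherence over all pure state decompositions of ρ equals f(ρ₀₀, ρ₁₁). (Corollary, two-dimensional case.) -/

import Mathlib

open Matrix BigOperators
open scoped ComplexOrder

noncomputable section

/-- A symmetric function: invariant under all coordinate permutations. -/
def SymmetricFn {n : ℕ} (f : (Fin n → ℝ) → ℝ) : Prop :=
  ∀ (σ : Equiv.Perm (Fin n)) (x : Fin n → ℝ), f (x ∘ σ) = f x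

/-- A density matrix: positive semidefinite with trace one. -/
def IsDensityMatrix {n : ℕ} (ρ : Matrix (Fin n) (Fin n) ℂ) : Prop :=
  ρ.PosSemidef ∧ ρ.trace = 1

/-- The rank-one projection `ψ ψ*` associated to a vector `ψ ∈ ℂⁿ`. -/
def outer {n : ℕ} (ψ : Fin n → ℂ) : Matrix (Fin n) (Fin n) ℂ :=
  Matrix.vecMulVec ψ (fun i => starRingEnd ℂ (ψ i))

/-- `(p, ψ)` is a pure state decomposition of `ρ`. -/
def IsDecomposition {n m : ℕ} (ρ : Matrix (Fin n) (Fin n) ℂ)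
    (p : Fin m → ℝ) (ψ : Fin m → Fin n → ℂ) : Prop :=
  (∀ k, 0 ≤ p k) ∧ (∑ k, p k = 1) ∧ (∀ k, ∑ i, ‖ψ k i‖ ^ 2 = 1) ∧
    ρ = ∑ k, (p k : ℂ) • outer (ψ k)

/-- The coherence vector `(|ψ₀|², …, |ψ_{n-1}|²)` of a vector `ψ`. -/
def cohVec {n : ℕ} (ψ : Fin n → ℂ) : Fin n → ℝ := fun i => ‖ψ i‖ ^ 2

/-- The average coherence of a pure state decomposition with respect to `f`. -/
def avgCoh {n m : ℕ} (f : (Fin n → ℝ) → ℝ) (p : Fin m → ℝ)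
    (ψ : Fin m → Fin n → ℂ) : ℝ :=
  ∑ k, p k * f (cohVec (ψ k))


lemma diag_real {ρ : Matrix (Fin 2) (Fin 2) ℂ} (h : ρ.IsHermitian) (i : Fin 2) :
    ρ i i = ((ρ i i).re : ℂ) := by
  have := h.apply i i
  have him : (ρ i i).im = 0 := by
    have := congrArg Complex.im this
    simp at this
    linarith
  exact (Complex.ext (by simp) (by simp [him])).symm

lemma quad_nonneg {ρ : Matrix (Fin 2) (Fin 2) ℂ} (h : ρ.PosSemidef) (x : Fin 2 → ℂ) :
    0 ≤ (starRingEnd ℂ (x 0) * (ρ 0 0 * x 0 + ρ 0 1 * x 1)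
      + starRingEnd ℂ (x 1) * (ρ 1 0 * x 0 + ρ 1 1 * x 1)).re := by
  have h2 := h.dotProduct_mulVec_nonneg x
  rw [Complex.le_def] at h2
  have := h2.1
  simpa [dotProduct, Matrix.mulVec, Fin.sum_univ_two] using this

lemma offdiag_sq_le {ρ : Matrix (Fin 2) (Fin 2) ℂ} (h : ρ.PosSemidef)
    (htr : ρ.trace = 1) :
    ‖ρ 0 1‖ ^ 2 ≤ (ρ 0 0).re * (ρ 1 1).re := by
  have hherm := h.1
  set a := (ρ 0 0).re with ha_def
  set b := (ρ 1 1).re with hb_def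
  set c := ρ 0 1 with hc_def
  have h00 : ρ 0 0 = (a : ℂ) := diag_real hherm 0
  have h11 : ρ 1 1 = (b : ℂ) := diag_real hherm 1
  have h10 : ρ 1 0 = starRingEnd ℂ c := (hherm.apply 1 0).symm
  have hnc : ‖c‖ ^ 2 = c.re ^ 2 + c.im ^ 2 := by
    rw [Complex.sq_norm, Complex.normSq_apply]; ring
  have ha : 0 ≤ a := by
    have := quad_nonneg h ![1, 0]
    simpa [h00] using this
  have hb : 0 ≤ b := by
    have := quad_nonneg h ![0, 1]
    simpa [h11] using this
  have hab : a + b = 1 := by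
    have := congrArg Complex.re htr
    simpa [Matrix.trace, Matrix.diag, Fin.sum_univ_two] using this
  rcases lt_or_ge 0 b with hbpos | hb0
  · have := quad_nonneg h ![(b : ℂ), -(starRingEnd ℂ c)]
    have key : 0 ≤ a * b ^ 2 - b * ‖c‖ ^ 2 := by
      convert this using 1
      simp [h00, h11, h10, hnc, Complex.mul_re, Complex.mul_im, Complex.add_re]
      rw [← hc_def]; ring
    nlinarith
  · have hbz : b = 0 := le_antisymm hb0 hb
    have hapos : 0 < a := by nlinarith
    have := quad_nonneg h ![-c, (a : ℂ)]
    have key : 0 ≤ b * a ^ 2 - a * ‖c‖ ^ 2 := by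
      convert this using 1
      simp [h00, h11, h10, hnc, Complex.mul_re, Complex.mul_im, Complex.add_re]
      rw [← hc_def]; ring
    nlinarith

lemma exists_good_decomp (ρ : Matrix (Fin 2) (Fin 2) ℂ) (hρ : IsDensityMatrix ρ) :
    ∃ (p : Fin 2 → ℝ) (ψ : Fin 2 → Fin 2 → ℂ),
      IsDecomposition ρ p ψ ∧ ∀ k i, ‖ψ k i‖ ^ 2 = (ρ i i).re := by
  obtain ⟨hpsd, htr⟩ := hρ
  have hherm := hpsd.1
  set a := (ρ 0 0).re with ha_def
  set b := (ρ 1 1).re with hb_def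
  set c := ρ 0 1 with hc_def
  have h00 : ρ 0 0 = (a : ℂ) := diag_real hherm 0
  have h11 : ρ 1 1 = (b : ℂ) := diag_real hherm 1
  have h10 : ρ 1 0 = starRingEnd ℂ c := (hherm.apply 1 0).symm
  have ha : 0 ≤ a := by
    have := quad_nonneg hpsd ![1, 0]; simpa [h00] using this
  have hb : 0 ≤ b := by
    have := quad_nonneg hpsd ![0, 1]; simpa [h11] using this
  have hab : a + b = 1 := by
    have := congrArg Complex.re htr
    simpa [Matrix.trace, Matrix.diag, Fin.sum_univ_two] using this
  have hkey : ‖c‖ ^ 2 ≤ a * b := offdiag_sq_le hpsd htr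
  set s : ℝ := Real.sqrt (a * b) with hs_def
  have hs0 : 0 ≤ s := Real.sqrt_nonneg _
  have hs2 : s ^ 2 = a * b := Real.sq_sqrt (mul_nonneg ha hb)
  have hcs : ‖c‖ ≤ s := by
    nlinarith [norm_nonneg c]
  set w : ℂ := if s = 0 then 0 else c / s with hw_def
  have hw1 : ‖w‖ ≤ 1 := by
    rw [hw_def]
    split_ifs with hs
    · simp
    · have hspos : 0 < s := lt_of_le_of_ne hs0 (Ne.symm hs)
      rw [norm_div]
      have hns : ‖((s : ℝ) : ℂ)‖ = s := by simp [abs_of_nonneg hs0]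
      rw [hns, div_le_one hspos]
      exact hcs
  have hws : (s : ℂ) * w = c := by
    rw [hw_def]
    split_ifs with hs
    · have : ‖c‖ = 0 := le_antisymm (hs ▸ hcs) (norm_nonneg c)
      simp [norm_eq_zero.mp this, hs]
    · field_simp
  set t : ℝ := ‖w‖ with ht_def
  set d : ℝ := Real.sqrt (1 - t ^ 2) with hd_def
  have ht0 : 0 ≤ t := norm_nonneg w
  have hd2 : d ^ 2 = 1 - t ^ 2 := Real.sq_sqrt (by nlinarith)
  set e : ℂ := if w = 0 then 1 else w / ‖w‖ with he_def
  have he1 : ‖e‖ = 1 := by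
    rw [he_def]; split_ifs with hw
    · simp
    · rw [norm_div]; simp [norm_eq_zero, hw]
  have het : e * (t : ℂ) = w := by
    rw [he_def]; split_ifs with hw
    · simp [hw, ht_def]
    · rw [ht_def]
      exact div_mul_cancel₀ w (by simp [norm_eq_zero, hw])
  set u : Fin 2 → ℂ := ![e * ((t : ℂ) + (d : ℂ) * Complex.I),
    e * ((t : ℂ) - (d : ℂ) * Complex.I)] with hu_def
  have hu1 : ∀ k, ‖u k‖ ^ 2 = 1 := by
    intro k
    have hgen : ∀ d' : ℝ, d' ^ 2 = 1 - t ^ 2 →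
        ‖e * ((t : ℂ) + (d' : ℂ) * Complex.I)‖ ^ 2 = 1 := by
      intro d' hd'
      rw [norm_mul, mul_pow, he1, one_pow, one_mul,
        Complex.sq_norm, Complex.normSq_apply]
      simp
      nlinarith
    fin_cases k
    · simpa [hu_def] using hgen d hd2
    · have heq : (t : ℂ) - (d : ℂ) * Complex.I
          = (t : ℂ) + ((-d : ℝ) : ℂ) * Complex.I := by push_cast; ring
      have := hgen (-d) (by nlinarith)
      rw [← heq] at this
      simpa [hu_def] using this
  have husum : u 0 + u 1 = 2 * w := by
    have : u 0 + u 1 = e * (2 * (t : ℂ)) := by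
      simp [hu_def]; ring
    rw [this, show e * (2 * (t:ℂ)) = 2 * (e * t) by ring, het]
  have huconj : ∀ k, (starRingEnd ℂ) (u k) * u k = 1 := by
    intro k
    rw [mul_comm, Complex.mul_conj]
    have := hu1 k
    rw [Complex.sq_norm] at this
    exact_mod_cast this
  set ψ : Fin 2 → Fin 2 → ℂ :=
    fun k => ![(Real.sqrt a : ℂ), (Real.sqrt b : ℂ) * starRingEnd ℂ (u k)]
    with hψ_def
  have hψ0 : ∀ k, ψ k 0 = (Real.sqrt a : ℂ) := by intro k; simp [hψ_def]
  have hψ1 : ∀ k, ψ k 1 = (Real.sqrt b : ℂ) * starRingEnd ℂ (u k) := by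
    intro k; simp [hψ_def]
  have hcoh : ∀ k i, ‖ψ k i‖ ^ 2 = (ρ i i).re := by
    intro k i
    fin_cases i
    · show ‖ψ k 0‖ ^ 2 = a
      rw [hψ0]
      simp [Real.sq_sqrt ha, _root_.sq_abs]
    · show ‖ψ k 1‖ ^ 2 = b
      rw [hψ1, norm_mul, mul_pow]
      have hcu : ‖(starRingEnd ℂ) (u k)‖ ^ 2 = 1 := by
        rw [RCLike.norm_conj]; exact hu1 k
      rw [hcu, mul_one]
      simp [Real.sq_sqrt hb, _root_.sq_abs]
  have hsa : ((Real.sqrt a : ℝ) : ℂ) * (Real.sqrt a : ℂ) = (a : ℂ) := by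
    norm_cast; exact Real.mul_self_sqrt ha
  have hsb : ((Real.sqrt b : ℝ) : ℂ) * (Real.sqrt b : ℂ) = (b : ℂ) := by
    norm_cast; exact Real.mul_self_sqrt hb
  have hsab : ((Real.sqrt a : ℝ) : ℂ) * (Real.sqrt b : ℂ) = (s : ℂ) := by
    norm_cast; rw [hs_def, Real.sqrt_mul ha]
  have husum' : (starRingEnd ℂ) (u 0) + (starRingEnd ℂ) (u 1)
      = 2 * (starRingEnd ℂ) w := by
    have := congrArg (starRingEnd ℂ) husum
    simpa [map_ofNat] using this
  have hws' : (s : ℂ) * (starRingEnd ℂ) w = (starRingEnd ℂ) c := by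
    have := congrArg (starRingEnd ℂ) hws
    simpa [Complex.conj_ofReal] using this
  refine ⟨fun _ => (1/2 : ℝ), ψ, ⟨fun k => by norm_num, by
      rw [Fin.sum_univ_two]; norm_num, fun k => by
      rw [Fin.sum_univ_two, hcoh k 0, hcoh k 1]; exact hab, ?_⟩, hcoh⟩
  ext i j
  rw [Fin.sum_univ_two]
  fin_cases i <;> fin_cases j <;>
    simp only [Fin.mk_zero, Fin.mk_one, Matrix.add_apply, Matrix.smul_apply, outer,
      Matrix.vecMulVec_apply, smul_eq_mul, hψ0, hψ1, _root_.map_mul, Complex.conj_ofReal,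
      Complex.conj_conj, Complex.ofReal_div, Complex.ofReal_one, Complex.ofReal_ofNat,
      Fin.isValue]
  · show ρ 0 0 = _
    rw [h00]
    linear_combination (-1 : ℂ) * hsa
  · show ρ 0 1 = _
    rw [← hc_def, ← hws]
    linear_combination (-w) * hsab - (((Real.sqrt a : ℂ) * (Real.sqrt b : ℂ))/2) * husum
  · show ρ 1 0 = _
    rw [h10, ← hws']
    linear_combination (-(starRingEnd ℂ) w) * hsab
      - (((Real.sqrt a : ℂ) * (Real.sqrt b : ℂ))/2) * husum'
  · show ρ 1 1 = _
    rw [h11]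
    linear_combination (-(starRingEnd ℂ (u 0) * u 0 + starRingEnd ℂ (u 1) * u 1)/2) * hsb
      - ((b:ℂ)/2) * (huconj 0) - ((b:ℂ)/2) * (huconj 1)

/-- Corollary (two-dimensional case): every qubit density matrix admits a pure
state decomposition whose pure states all share the diagonal of `ρ`; hence for
every symmetric concave `f` the maximum of the average coherence over all pure
state decompositions equals `f(ρ₀₀, ρ₁₁)`. -/
theorem dim_two_max_avg_coherence (ρ : Matrix (Fin 2) (Fin 2) ℂ)
    (hρ : IsDensityMatrix ρ) :
    (∃ (m : ℕ) (p : Fin m → ℝ) (ψ : Fin m → Fin 2 → ℂ),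
        IsDecomposition ρ p ψ ∧ ∀ k i, ‖ψ k i‖ ^ 2 = (ρ i i).re) ∧
    ∀ f : (Fin 2 → ℝ) → ℝ, SymmetricFn f → ConcaveOn ℝ (stdSimplex ℝ (Fin 2)) f →
      IsGreatest {c : ℝ | ∃ (m : ℕ) (p : Fin m → ℝ) (ψ : Fin m → Fin 2 → ℂ),
          IsDecomposition ρ p ψ ∧ c = avgCoh f p ψ}
        (f (fun i => (ρ i i).re)) := by
  obtain ⟨p₀, ψ₀, hdec₀, hcoh₀⟩ := exists_good_decomp ρ hρ
  refine ⟨⟨2, p₀, ψ₀, hdec₀, hcoh₀⟩, ?_⟩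
  intro f _hsym hconc
  constructor
  · refine ⟨2, p₀, ψ₀, hdec₀, ?_⟩
    have hv : ∀ k, cohVec (ψ₀ k) = fun i => (ρ i i).re := by
      intro k; funext i; exact hcoh₀ k i
    rw [avgCoh]
    simp only [hv]
    rw [← Finset.sum_mul, hdec₀.2.1, one_mul]
  · rintro x ⟨m, p, ψ, ⟨hp0, hp1, hnorm, hsum⟩, rfl⟩
    have hmem : ∀ k, cohVec (ψ k) ∈ stdSimplex ℝ (Fin 2) :=
      fun k => ⟨fun i => sq_nonneg _, hnorm k⟩
    have hdiag : (fun i => (ρ i i).re) = ∑ k, p k • cohVec (ψ k) := by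
      funext i
      have h1 : ρ i i = ((∑ k, p k * ‖ψ k i‖ ^ 2 : ℝ) : ℂ) := by
        rw [hsum, Matrix.sum_apply]
        push_cast
        refine Finset.sum_congr rfl fun k _ => ?_
        rw [Matrix.smul_apply, outer, Matrix.vecMulVec_apply, smul_eq_mul,
          Complex.mul_conj]
        simp [Complex.normSq_eq_norm_sq]
      have h2 : (ρ i i).re = ∑ k, p k * ‖ψ k i‖ ^ 2 := by
        rw [h1, Complex.ofReal_re]
      rw [h2]
      simp [cohVec, Finset.sum_apply]
    calc avgCoh f p ψ = ∑ k, p k • f (cohVec (ψ k)) := by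
          rw [avgCoh]; simp [smul_eq_mul]
      _ ≤ f (∑ k, p k • cohVec (ψ k)) :=
          hconc.le_map_sum (fun k _ => hp0 k) hp1 (fun k _ => hmem k)
      _ = f (fun i => (ρ i i).re) := by rw [← hdiag]
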